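/- If G, H ∈ 𝔾 have structural sets S and T respectively such that R_S(G) ≃ R_T(H), then σ(G) and σ(H) differ at most by N(G;S) ∪ N(H;T). -/

import Mathlib

open scoped Classical

noncomputable section

/-- A finite weighted digraph with weights in the field `𝕎 = RatFunc ℂ` of complex
rational functions: a finite vertex set together with a weight function, where
weight `0` encodes the absence of an edge (no parallel edges, loops allowed). -/
structure WDigraph (V : Type*) [Fintype V] [DecidableEq V] where
  verts : Finset V
  w : V → V → RatFunc ℂ

namespace WDigraph

variable {V : Type*} [Fintype V] [DecidableEq V]

/-- Membership in `𝔾`: all edges (nonzero weights) join vertices of `G`. -/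
def Wf (G : WDigraph V) : Prop :=
  ∀ u v, G.w u v ≠ 0 → u ∈ G.verts ∧ v ∈ G.verts

/-- `det (M(G) - λ I)` as an element of `𝕎`. -/
def charDet (G : WDigraph V) : RatFunc ℂ :=
  Matrix.det (Matrix.of fun i j : G.verts =>
    G.w i.1 j.1 - if i = j then (RatFunc.X : RatFunc ℂ) else 0)

/-- The spectrum of `G`: the list (multiset) of complex solutions, with
multiplicity, of `det (M(G,λ) - λ I) = 0`. -/
def spec (G : WDigraph V) : Multiset ℂ := G.charDet.num.roots

/-- Membership in `𝔾_π`: every adjacency matrix entry `p/q` has `π(p/q) = deg p - deg q ≤ 0`. -/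
def PiNonpos (G : WDigraph V) : Prop :=
  ∀ u v, (G.w u v).num.degree ≤ (G.w u v).denom.degree

end WDigraph

/-- Two spectra (lists) differ at most by the set `N`: after removing all entries
with values in `N` they agree. -/
def SpecDiffAtMost (s₁ s₂ : Multiset ℂ) (N : Set ℂ) : Prop :=
  s₁.filter (fun z => z ∉ N) = s₂.filter (fun z => z ∉ N)

variable {V : Type*} [Fintype V] [DecidableEq V]

/-- `S` is a structural set of `G`: `S` is a nonempty subset of the vertices, the
complement of `S` induces no cycles in `ℓ(G)` (i.e. no closed walk through
consecutive-distinct vertices all lying outside `S`), and no loop at a vertex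
outside `S` has weight `λ`. -/
def IsStructuralSet (G : WDigraph V) (S : Finset V) : Prop :=
  S.Nonempty ∧ S ⊆ G.verts ∧
    (∀ v, ¬ Relation.TransGen
      (fun a b => a ∈ G.verts ∧ b ∈ G.verts ∧ a ∉ S ∧ b ∉ S ∧ a ≠ b ∧ G.w a b ≠ 0) v v) ∧
    ∀ v ∈ G.verts, v ∉ S → G.w v v ≠ RatFunc.X

/-- `β` is a branch of `G` from `u` to `v` with respect to `S`: a path or cycle
from `u` to `v` in `G` all of whose interior vertices lie outside `S`. -/
def IsBranch (G : WDigraph V) (S : Finset V) (u v : V) (β : List V) : Prop :=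
  u ∈ S ∧ v ∈ S ∧
    ∃ int : List V, β = u :: (int ++ [v]) ∧
      (∀ x ∈ int, x ∈ G.verts ∧ x ∉ S) ∧
      (u :: int).Nodup ∧ v ∉ int ∧
      List.Chain' (fun a b => G.w a b ≠ 0) β

/-- The branch product `𝒫_ω(β)` of a branch `β = v₁, …, v_m`. -/
def branchProd {V : Type*} (w : V → V → RatFunc ℂ) : List V → RatFunc ℂ
  | [] => 0
  | [_] => 0
  | [a, b] => w a b
  | a :: b :: c :: rest => w a b * branchProd w (b :: c :: rest) / (RatFunc.X - w b b)

/-- The isospectral reduction `R_S(G)`: the graph on vertex set `S` whose weight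
from `u` to `v` is the sum of the branch products of all branches from `u` to
`v` with respect to `S`. -/
def WDigraph.reduce (G : WDigraph V) (S : Finset V) : WDigraph V where
  verts := S
  w := fun u v => ∑ᶠ β ∈ {β : List V | IsBranch G S u v β}, branchProd G.w β

/-- The set `N(G;S)`: all `z ∈ ℂ` such that for some vertex `v` of `G` off `S`,
either `z = ω(e_vv)(z)` or `ω(e_vv)` is undefined at `z`. -/
def NSet (G : WDigraph V) (S : Finset V) : Set ℂ :=
  {z | ∃ v ∈ G.verts, v ∉ S ∧
    ((RatFunc.X - G.w v v).num.eval z = 0 ∨ (G.w v v).denom.eval z = 0)}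

/-- Isomorphism of weighted digraphs: a vertex bijection carrying edges to edges
and preserving weights. -/
def WDigraph.Isom {V₁ : Type*} [Fintype V₁] [DecidableEq V₁]
    {V₂ : Type*} [Fintype V₂] [DecidableEq V₂]
    (G : WDigraph V₁) (H : WDigraph V₂) : Prop :=
  ∃ ρ : G.verts ≃ H.verts, ∀ u v : G.verts, H.w (ρ u).1 (ρ v).1 = G.w u.1 v.1




/-! ### Auxiliary machinery -/

section Aux

open Polynomial

namespace IsoRed

set_option linter.unusedSectionVars false

/-- Sum over a set contained in a finset, where the function vanishes at finset points
outside the set. -/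
lemma finsum_mem_finset_of_subset {α : Type*} {M : Type*} [AddCommMonoid M]
    {s : Set α} {T : Finset α} {f : α → M}
    (h1 : s ⊆ ↑T) (h2 : ∀ x ∈ T, x ∉ s → f x = 0) :
    ∑ᶠ x ∈ s, f x = ∑ x ∈ T, f x := by
  classical
  have hs : s = ↑(T.filter (· ∈ s)) := by
    ext x
    simp only [Finset.coe_filter, Set.mem_setOf_eq]
    exact ⟨fun hx => ⟨h1 hx, hx⟩, fun hx => hx.2⟩
  rw [hs, finsum_mem_coe_finset]
  refine Finset.sum_subset (Finset.filter_subset _ _) ?_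
  intro x hx hnx
  refine h2 x hx ?_
  intro hxs
  exact hnx (Finset.mem_filter.mpr ⟨hx, hxs⟩)

lemma finsum_mem_eq_of_subset {α : Type*} {M : Type*} [AddCommMonoid M]
    {s t : Set α} {f : α → M}
    (hsub : s ⊆ t) (ht : t.Finite) (h0 : ∀ x ∈ t, x ∉ s → f x = 0) :
    ∑ᶠ x ∈ s, f x = ∑ᶠ x ∈ t, f x := by
  classical
  have h1 : s ⊆ ↑ht.toFinset := by
    intro x hx; simpa using hsub hx
  rw [finsum_mem_finset_of_subset h1 (fun x hx hnx => h0 x (by simpa using hx) hnx)]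
  rw [← finsum_mem_coe_finset, ht.coe_toFinset]

variable {V : Type*} [Fintype V] [DecidableEq V]

lemma branchProd_eq_zero {w : V → V → RatFunc ℂ} :
    ∀ {l : List V}, ¬ l.Chain' (fun a b => w a b ≠ 0) → branchProd w l = 0
  | [] , h => absurd List.isChain_nil h
  | [a], h => absurd (List.isChain_singleton a) h
  | [a, b], h => by
    have : w a b = 0 := by
      by_contra hw
      exact h (List.isChain_pair.mpr hw)
    simpa [branchProd] using this
  | a :: b :: c :: r, h => by
    rw [List.Chain', List.isChain_cons_cons] at h
    by_cases hab : w a b = 0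
    · simp [branchProd, hab]
    · have : ¬ (b :: c :: r).Chain' (fun a b => w a b ≠ 0) := by
        intro hc; exact h ⟨hab, hc⟩
      rw [branchProd, branchProd_eq_zero this]
      simp

lemma branchProd_congr {w w' : V → V → RatFunc ℂ} :
    ∀ {l : List V}, (∀ a ∈ l.dropLast, ∀ b, w' a b = w a b) →
      branchProd w' l = branchProd w l
  | [] , _ => rfl
  | [a], _ => rfl
  | [a, b], h => by
    have := h a (by simp) b
    simp [branchProd, this]
  | a :: b :: c :: r, h => by
    have ha : ∀ x, w' a x = w a x := h a (by simp)
    have hb : ∀ x, w' b x = w b x := h b (by simp)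
    have htail : ∀ x ∈ (b :: c :: r).dropLast, ∀ y, w' x y = w x y := by
      intro x hx y
      refine h x ?_ y
      simp only [List.dropLast_cons₂] at hx ⊢
      exact List.mem_cons_of_mem _ hx
    rw [branchProd, branchProd, branchProd_congr htail, ha, hb]

lemma isBranch_length_le {G : WDigraph V} {S : Finset V} {u v : V} {β : List V}
    (h : IsBranch G S u v β) : β.length ≤ Fintype.card V + 2 := by
  obtain ⟨-, -, int, rfl, -, hnd, -, -⟩ := h
  have : int.Nodup := (List.nodup_cons.mp hnd).2
  have := this.length_le_card
  simp only [List.length_cons, List.length_append, List.length_singleton, List.length_nil]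
  omega

lemma branchSet_finite (G : WDigraph V) (S : Finset V) (u v : V) :
    {β : List V | IsBranch G S u v β}.Finite :=
  (List.finite_length_le V (Fintype.card V + 2)).subset fun _ h => isBranch_length_le h

/-- Branches without the `Chain'` (edge-existence) condition. -/
def IsPreBranch (G : WDigraph V) (S : Finset V) (u v : V) (β : List V) : Prop :=
  u ∈ S ∧ v ∈ S ∧
    ∃ int : List V, β = u :: (int ++ [v]) ∧
      (∀ x ∈ int, x ∈ G.verts ∧ x ∉ S) ∧
      (u :: int).Nodup ∧ v ∉ int

lemma isBranch_iff {G : WDigraph V} {S : Finset V} {u v : V} {β : List V} :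
    IsBranch G S u v β ↔ IsPreBranch G S u v β ∧
      β.Chain' (fun a b => G.w a b ≠ 0) := by
  constructor
  · rintro ⟨h1, h2, int, rfl, h3, h4, h5, h6⟩
    exact ⟨⟨h1, h2, int, rfl, h3, h4, h5⟩, h6⟩
  · rintro ⟨⟨h1, h2, int, rfl, h3, h4, h5⟩, h6⟩
    exact ⟨h1, h2, int, rfl, h3, h4, h5, h6⟩

lemma isPreBranch_length_le {G : WDigraph V} {S : Finset V} {u v : V} {β : List V}
    (h : IsPreBranch G S u v β) : β.length ≤ Fintype.card V + 2 := by
  obtain ⟨-, -, int, rfl, -, hnd, -⟩ := h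
  have : int.Nodup := (List.nodup_cons.mp hnd).2
  have := this.length_le_card
  simp only [List.length_cons, List.length_append, List.length_singleton, List.length_nil]
  omega

lemma preBranchSet_finite (G : WDigraph V) (S : Finset V) (u v : V) :
    {β : List V | IsPreBranch G S u v β}.Finite :=
  (List.finite_length_le V (Fintype.card V + 2)).subset fun _ h => isPreBranch_length_le h

lemma reduce_w_eq_zero {G : WDigraph V} {S : Finset V} {u v : V}
    (h : u ∉ S ∨ v ∉ S) : (G.reduce S).w u v = 0 := by
  have : {β : List V | IsBranch G S u v β} = ∅ := by
    ext β
    simp only [Set.mem_setOf_eq, Set.mem_empty_iff_false, iff_false]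
    rintro ⟨h1, h2, -⟩
    rcases h with h | h
    exacts [h h1, h h2]
  show ∑ᶠ β ∈ {β : List V | IsBranch G S u v β}, branchProd G.w β = 0
  rw [this, finsum_mem_empty]

lemma reduce_Wf (G : WDigraph V) (S : Finset V) : (G.reduce S).Wf := by
  intro u v h
  by_contra hc
  rcases not_and_or.mp hc with hc | hc
  · exact h (reduce_w_eq_zero (Or.inl hc))
  · exact h (reduce_w_eq_zero (Or.inr hc))


lemma branchProd_pair (w : V → V → RatFunc ℂ) (a b : V) :
    branchProd w [a, b] = w a b := rfl

lemma branchProd_triple (w : V → V → RatFunc ℂ) (a b c : V) :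
    branchProd w [a, b, c] = w a b * w b c / (RatFunc.X - w b b) := rfl

lemma chain'_pair' {w : V → V → RatFunc ℂ} {a b : V} (h : w a b ≠ 0) :
    List.Chain' (fun x y => w x y ≠ 0) [a, b] := List.isChain_pair.mpr h

/-- Reducing over the full vertex set does not change weights between vertices. -/
lemma reduce_w_full (G : WDigraph V) {u v : V} (hu : u ∈ G.verts) (hv : v ∈ G.verts) :
    (G.reduce G.verts).w u v = G.w u v := by
  classical
  show ∑ᶠ β ∈ {β : List V | IsBranch G G.verts u v β}, branchProd G.w β = G.w u v
  have hsub : {β : List V | IsBranch G G.verts u v β} ⊆ ↑({[u, v]} : Finset (List V)) := by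
    rintro β ⟨-, -, int, rfl, h3, -, -, -⟩
    have hint : int = [] := by
      cases int with
      | nil => rfl
      | cons a t => exact absurd (h3 a (by simp)).1 (h3 a (by simp)).2
    subst hint
    simp
  rw [finsum_mem_finset_of_subset hsub ?h2, Finset.sum_singleton, branchProd_pair]
  case h2 =>
    intro x hx hnx
    simp only [Finset.mem_singleton] at hx
    subst hx
    by_cases hw : G.w u v = 0
    · simp [branchProd_pair, hw]
    · exact absurd ⟨hu, hv, [], rfl, by simp, by simp, by simp,
        chain'_pair' hw⟩ hnx

/-- The one-vertex-removal reduction formula. -/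
lemma reduce_erase_w (G : WDigraph V) {v : V} (hv : v ∈ G.verts) {u u' : V}
    (hu : u ∈ G.verts.erase v) (hu' : u' ∈ G.verts.erase v) :
    (G.reduce (G.verts.erase v)).w u u' =
      G.w u u' + G.w u v * G.w v u' / (RatFunc.X - G.w v v) := by
  classical
  obtain ⟨huv, huG⟩ := Finset.mem_erase.mp hu
  obtain ⟨hu'v, hu'G⟩ := Finset.mem_erase.mp hu'
  show ∑ᶠ β ∈ {β : List V | IsBranch G (G.verts.erase v) u u' β}, branchProd G.w β = _
  have hne : ([u, u'] : List V) ≠ [u, v, u'] := by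
    intro h; exact absurd (congrArg List.length h) (by simp)
  have hsub : {β : List V | IsBranch G (G.verts.erase v) u u' β} ⊆
      ↑({[u, u'], [u, v, u']} : Finset (List V)) := by
    rintro β ⟨-, -, int, rfl, h3, hnd, -, -⟩
    have hint : int = [] ∨ int = [v] := by
      have hall : ∀ x ∈ int, x = v := by
        intro x hx
        obtain ⟨hxG, hxS⟩ := h3 x hx
        by_contra hxv
        exact hxS (Finset.mem_erase.mpr ⟨hxv, hxG⟩)
      cases int with
      | nil => exact Or.inl rfl
      | cons a t =>
        cases t with
        | nil => exact Or.inr (by rw [hall a (by simp)])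
        | cons b t2 =>
          exfalso
          have ha : a = v := hall a (by simp)
          have hb : b = v := hall b (by simp)
          have : (a :: b :: t2).Nodup := (List.nodup_cons.mp hnd).2
          rw [ha, hb] at this
          simp at this
    rcases hint with h | h <;> subst h <;> simp
  rw [finsum_mem_finset_of_subset hsub ?h2, Finset.sum_pair hne,
    branchProd_pair, branchProd_triple]
  case h2 =>
    intro x hx hnx
    simp only [Finset.mem_insert, Finset.mem_singleton] at hx
    rcases hx with hx | hx <;> subst hx
    · by_cases hw : G.w u u' = 0
      · simp [branchProd_pair, hw]
      · exact absurd ⟨hu, hu', [], rfl, by simp, by simp, by simp,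
          chain'_pair' hw⟩ hnx
    · rw [branchProd_triple]
      by_cases hw1 : G.w u v = 0
      · simp [hw1]
      by_cases hw2 : G.w v u' = 0
      · simp [hw2]
      refine absurd ⟨hu, hu', [v], rfl, ?_, ?_, ?_, ?_⟩ hnx
      · intro x hx
        simp only [List.mem_singleton] at hx
        subst hx
        exact ⟨hv, by simp⟩
      · simp [List.nodup_cons, huv]
      · simp [Ne.symm, hu'v]
      · exact List.isChain_cons_cons.mpr ⟨hw1, chain'_pair' hw2⟩


/-- Removing one non-loop-λ vertex: `det(M(G)-λI) = (ω(e_vv)-λ)·det(M(R_{V∖v}(G))-λI)`. -/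
lemma charDet_erase (G : WDigraph V) {v : V} (hv : v ∈ G.verts)
    (hX : G.w v v ≠ RatFunc.X) :
    G.charDet = (G.w v v - RatFunc.X) * (G.reduce (G.verts.erase v)).charDet := by
  classical
  set X : RatFunc ℂ := RatFunc.X with hXdef
  set S' := G.verts.erase v with hS'
  let e : {x // x ∈ G.verts} ≃ {x // x ∈ S'} ⊕ Unit :=
    { toFun := fun i => if h : i.1 = v then Sum.inr () else
        Sum.inl ⟨i.1, Finset.mem_erase.mpr ⟨h, i.2⟩⟩
      invFun := fun x => Sum.rec (fun a => ⟨a.1, Finset.mem_of_mem_erase a.2⟩)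
        (fun _ => ⟨v, hv⟩) x
      left_inv := by
        intro i
        by_cases h : i.1 = v
        · simp only [h, dif_pos]
          exact Subtype.ext h.symm
        · simp only [h, dif_neg, not_false_iff]
      right_inv := by
        rintro (a | u)
        · have : a.1 ≠ v := (Finset.mem_erase.mp a.2).1
          simp only [this, dif_neg, not_false_iff]
        · simp }
  set M : Matrix {x // x ∈ G.verts} {x // x ∈ G.verts} (RatFunc ℂ) :=
    Matrix.of fun i j => G.w i.1 j.1 - if i = j then X else 0 with hM
  set A : Matrix {x // x ∈ S'} {x // x ∈ S'} (RatFunc ℂ) :=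
    Matrix.of fun i j => G.w i.1 j.1 - if i = j then X else 0 with hA
  set B : Matrix {x // x ∈ S'} Unit (RatFunc ℂ) :=
    Matrix.of fun i _ => G.w i.1 v with hB
  set C : Matrix Unit {x // x ∈ S'} (RatFunc ℂ) :=
    Matrix.of fun _ j => G.w v j.1 with hC
  set D : Matrix Unit Unit (RatFunc ℂ) :=
    Matrix.of fun _ _ => G.w v v - X with hD
  have hsyml : ∀ a : {x // x ∈ S'}, e.symm (Sum.inl a) =
      (⟨a.1, Finset.mem_of_mem_erase a.2⟩ : {x // x ∈ G.verts}) := fun a => rfl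
  have hsymr : ∀ u : Unit, e.symm (Sum.inr u) = (⟨v, hv⟩ : {x // x ∈ G.verts}) :=
    fun _ => rfl
  have hre : Matrix.reindex e e M = Matrix.fromBlocks A B C D := by
    ext i j
    rcases i with a | i <;> rcases j with b | j <;>
      simp only [Matrix.reindex_apply, Matrix.submatrix_apply, hsyml, hsymr]
    · have hab : ((⟨a.1, Finset.mem_of_mem_erase a.2⟩ : {x // x ∈ G.verts}) =
          ⟨b.1, Finset.mem_of_mem_erase b.2⟩) ↔ a = b := by
        rw [Subtype.mk.injEq, Subtype.ext_iff]
      simp only [hM, Matrix.of_apply, Matrix.fromBlocks_apply₁₁, hA]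
      rw [if_congr hab rfl rfl]
    · have hab : ((⟨a.1, Finset.mem_of_mem_erase a.2⟩ : {x // x ∈ G.verts}) =
          ⟨v, hv⟩) ↔ False := by
        simp [Subtype.ext_iff, (Finset.mem_erase.mp a.2).1]
      simp only [hM, Matrix.of_apply, Matrix.fromBlocks_apply₁₂, hB]
      rw [if_congr hab rfl rfl, if_false, sub_zero]
    · have hab : ((⟨v, hv⟩ : {x // x ∈ G.verts}) =
          ⟨b.1, Finset.mem_of_mem_erase b.2⟩) ↔ False := by
        simp [Subtype.ext_iff, Ne.symm (Finset.mem_erase.mp b.2).1]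
      simp only [hM, Matrix.of_apply, Matrix.fromBlocks_apply₂₁, hC]
      rw [if_congr hab rfl rfl, if_false, sub_zero]
    · simp [hM, hD]
  have hDdet : D.det = G.w v v - X := by
    rw [Matrix.det_unique]; rfl
  have hDne : G.w v v - X ≠ 0 := sub_ne_zero.mpr hX
  haveI : Invertible D := D.invertibleOfIsUnitDet
    (by rw [hDdet]; exact isUnit_iff_ne_zero.mpr hDne)
  have hDinv : ⅟ D = Matrix.of fun _ _ => (G.w v v - X)⁻¹ := by
    refine invOf_eq_right_inv ?_
    ext i j
    simp [Matrix.mul_apply, Matrix.one_apply, hD, mul_inv_cancel₀ hDne]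
  have hSchur : A - B * ⅟ D * C = Matrix.of fun i j : {x // x ∈ S'} =>
      (G.reduce S').w i.1 j.1 - if i = j then X else 0 := by
    ext i j
    have hBDC : (B * ⅟ D * C) i j = G.w i.1 v * (G.w v v - X)⁻¹ * G.w v j.1 := by
      rw [hDinv]
      simp [Matrix.mul_apply, hB, hC]
    have hred : (G.reduce S').w i.1 j.1 =
        G.w i.1 j.1 + G.w i.1 v * G.w v j.1 / (X - G.w v v) :=
      reduce_erase_w G hv i.2 j.2
    simp only [Matrix.sub_apply, hBDC, hA, Matrix.of_apply, hred]
    have h1 : (G.w v v - X)⁻¹ = -(X - G.w v v)⁻¹ := by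
      rw [← neg_sub X (G.w v v)]
      exact inv_neg
    rw [h1, div_eq_mul_inv]
    ring
  have : G.charDet = M.det := rfl
  rw [this, ← Matrix.det_reindex_self e M, hre, Matrix.det_fromBlocks₂₂, hDdet, hSchur]
  rfl


lemma WDigraph.ext' {G H : WDigraph V} (h1 : G.verts = H.verts) (h2 : G.w = H.w) :
    G = H := by
  cases G; cases H; simp_all

lemma branchProd_cons_cons (w : V → V → RatFunc ℂ) (a b : V) {l : List V} (hl : l ≠ []) :
    branchProd w (a :: b :: l) = w a b * branchProd w (b :: l) / (RatFunc.X - w b b) := by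
  cases l with
  | nil => exact absurd rfl hl
  | cons c r => rfl

/-- In a graph whose off-`S` part is acyclic, there is an off-`S` vertex with no
incoming edges from other off-`S` vertices. -/
lemma exists_source (G : WDigraph V) (hWf : G.Wf) {S : Finset V}
    (hS : IsStructuralSet G S) {x₀ : V} (hx₀ : x₀ ∈ G.verts) (hx₀S : x₀ ∉ S) :
    ∃ v ∈ G.verts, v ∉ S ∧ ∀ x, x ∉ S → x ≠ v → G.w x v = 0 := by
  classical
  set r : V → V → Prop := fun a b =>
    a ∈ G.verts ∧ b ∈ G.verts ∧ a ∉ S ∧ b ∉ S ∧ a ≠ b ∧ G.w a b ≠ 0 with hr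
  haveI : IsTrans V (Relation.TransGen r) := ⟨fun _ _ _ => Relation.TransGen.trans⟩
  haveI : IsIrrefl V (Relation.TransGen r) := ⟨hS.2.2.1⟩
  have hwf := Finite.wellFounded_of_trans_of_irrefl (Relation.TransGen r)
  obtain ⟨v, hv, hmin⟩ := hwf.has_min {x | x ∈ G.verts ∧ x ∉ S} ⟨x₀, hx₀, hx₀S⟩
  refine ⟨v, hv.1, hv.2, ?_⟩
  intro x hxS hxv
  by_contra hw
  by_cases hxG : x ∈ G.verts
  · exact hmin x ⟨hxG, hxS⟩ (Relation.TransGen.single ⟨hxG, hv.1, hxS, hv.2, hxv, hw⟩)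
  · exact hxG (hWf x v hw).1

/-- Weights out of off-`S` vertices are unchanged by removing a source `v`. -/
lemma reduce_erase_w_src (G : WDigraph V) (hWf : G.Wf) {S : Finset V} {v : V}
    (hv : v ∈ G.verts) (hvS : v ∉ S)
    (hsrc : ∀ x, x ∉ S → x ≠ v → G.w x v = 0) {a : V}
    (ha : a ∈ G.verts.erase v) (haS : a ∉ S) (b : V) :
    (G.reduce (G.verts.erase v)).w a b = G.w a b := by
  obtain ⟨hav, haG⟩ := Finset.mem_erase.mp ha
  by_cases hb : b ∈ G.verts.erase v
  · rw [reduce_erase_w G hv ha hb, hsrc a haS hav]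
    simp
  · rw [reduce_w_eq_zero (Or.inr hb)]
    by_cases hbv : b = v
    · subst hbv
      exact (hsrc a haS hav).symm
    · by_contra hw
      have hbG := (hWf a b fun h => hw h.symm).2
      exact hb (Finset.mem_erase.mpr ⟨hbv, hbG⟩)

lemma structural_reduce_erase (G : WDigraph V) (hWf : G.Wf) {S : Finset V}
    (hS : IsStructuralSet G S) {v : V} (hv : v ∈ G.verts) (hvS : v ∉ S)
    (hsrc : ∀ x, x ∉ S → x ≠ v → G.w x v = 0) :
    IsStructuralSet (G.reduce (G.verts.erase v)) S := by
  obtain ⟨hne, hsub, hcyc, hloop⟩ := hS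
  have hverts : (G.reduce (G.verts.erase v)).verts = G.verts.erase v := rfl
  refine ⟨hne, ?_, ?_, ?_⟩
  · intro x hx
    rw [hverts]
    exact Finset.mem_erase.mpr ⟨fun h => hvS (h ▸ hx), hsub hx⟩
  · intro x hx
    refine hcyc x (Relation.TransGen.mono ?_ _ _ hx)
    rintro a b ⟨haG, hbG, haS, hbS, hab, hw⟩
    rw [hverts] at haG hbG
    refine ⟨Finset.mem_of_mem_erase haG, Finset.mem_of_mem_erase hbG, haS, hbS, hab, ?_⟩
    rwa [reduce_erase_w_src G hWf hv hvS hsrc haG haS] at hw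
  · intro x hx hxS
    rw [hverts] at hx
    rw [reduce_erase_w_src G hWf hv hvS hsrc hx hxS]
    exact hloop x (Finset.mem_of_mem_erase hx) hxS

/-- In a branch, the source vertex `v` can only be the first interior vertex. -/
lemma branch_source_head {G : WDigraph V} {S : Finset V} {u u' v : V} {β : List V}
    (hβ : IsBranch G S u u' β) (hvS : v ∉ S)
    (hsrc : ∀ x, x ∉ S → x ≠ v → G.w x v = 0) (hvβ : v ∈ β) :
    ∃ r, β = u :: v :: r := by
  obtain ⟨huS, hu'S, int, rfl, hint, hnd, hu'i, hch⟩ := hβ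
  have hvu : v ≠ u := fun h => hvS (h ▸ huS)
  have hvu' : v ≠ u' := fun h => hvS (h ▸ hu'S)
  have hvint : v ∈ int := by
    rcases List.mem_cons.mp hvβ with h | h
    · exact absurd h hvu
    rcases List.mem_append.mp h with h | h
    · exact h
    · simp only [List.mem_singleton] at h
      exact absurd h hvu'
  obtain ⟨l₁, l₂, rfl⟩ := List.append_of_mem hvint
  cases l₁ with
  | nil => exact ⟨l₂ ++ [u'], by simp⟩
  | cons q t =>
    exfalso
    have hql : (q :: t) ≠ [] := by simp
    set x := (q :: t).getLast hql with hx
    have hxmem : x ∈ q :: t := List.getLast_mem hql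
    have hxint : x ∈ (q :: t) ++ v :: l₂ := List.mem_append.mpr (Or.inl hxmem)
    have hsplit : u :: (((q :: t) ++ v :: l₂) ++ [u']) =
        (u :: q :: t) ++ (v :: (l₂ ++ [u'])) := by simp
    rw [hsplit] at hch; simp only [List.Chain', List.isChain_append] at hch
    have hwxv : G.w x v ≠ 0 := by
      refine hch.2.2 x ?_ v rfl
      rw [List.getLast?_cons_cons, List.getLast?_eq_getLast hql]
      exact rfl
    have hxS : x ∉ S := (hint x hxint).2
    have hxv : x ≠ v := by
      intro h
      have hnd' : ((q :: t) ++ v :: l₂).Nodup := (List.nodup_cons.mp hnd).2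
      have := (List.nodup_append.mp hnd').2.2
      exact this x hxmem v (by simp) h
    exact hwxv (hsrc x hxS hxv)


/-- Reduction in two steps (first removing a source vertex `v ∉ S`) agrees with
reduction in one step. -/
lemma reduce_reduce (G : WDigraph V) (hWf : G.Wf) {S : Finset V}
    (hS : IsStructuralSet G S) {v : V} (hv : v ∈ G.verts) (hvS : v ∉ S)
    (hsrc : ∀ x, x ∉ S → x ≠ v → G.w x v = 0) :
    (G.reduce (G.verts.erase v)).reduce S = G.reduce S := by
  classical
  set X : RatFunc ℂ := RatFunc.X with hX
  set S' := G.verts.erase v with hS'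
  set G' := G.reduce S' with hG'
  have hvv : G.w v v ≠ X := hS.2.2.2 v hv hvS
  have hXv : X - G.w v v ≠ 0 := sub_ne_zero.mpr (Ne.symm hvv)
  have hSsub : S ⊆ S' := fun x hx =>
    Finset.mem_erase.mpr ⟨fun h => hvS (h ▸ hx), hS.2.1 hx⟩
  refine WDigraph.ext' rfl ?_
  funext u u'
  by_cases huS : u ∈ S
  case neg => rw [reduce_w_eq_zero (Or.inl huS), reduce_w_eq_zero (Or.inl huS)]
  by_cases hu'S : u' ∈ S
  case neg => rw [reduce_w_eq_zero (Or.inr hu'S), reduce_w_eq_zero (Or.inr hu'S)]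
  set g : List V → List V := fun l => u :: v :: l.tail with hg
  set B' : Set (List V) := {β | IsBranch G' S u u' β} with hB'
  set preB : Set (List V) := {β | IsPreBranch G' S u u' β} with hpreB
  set B : Set (List V) := {β | IsBranch G S u u' β} with hB
  set B0 : Set (List V) := {β | β ∈ B ∧ ¬ ∃ r, β = u :: v :: r} with hB0
  set B1 : Set (List V) := {β | β ∈ B ∧ ∃ r, β = u :: v :: r} with hB1
  have hpreBfin : preB.Finite := preBranchSet_finite G' S u u'
  have hBfin : B.Finite := branchSet_finite G S u u'
  have step1 : ∑ᶠ β ∈ B', branchProd G'.w β = ∑ᶠ β ∈ preB, branchProd G'.w β := by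
    refine finsum_mem_eq_of_subset (fun β hβ => (isBranch_iff.mp hβ).1) hpreBfin ?_
    intro β hβ hnB
    by_contra hnz
    have hch : β.Chain' (fun a b => G'.w a b ≠ 0) := by
      by_contra hc; exact hnz (branchProd_eq_zero hc)
    exact hnB (isBranch_iff.mpr ⟨hβ, hch⟩)
  have step2 : ∀ β ∈ preB, branchProd G'.w β =
      branchProd G.w β + branchProd G.w (g β) := by
    rintro β ⟨-, -, int, rfl, hint, hnd, hu'i⟩
    have hintP : ∀ x ∈ int, x ∈ S' ∧ x ∉ S := hint
    have hagree : ∀ a ∈ int, ∀ b, G'.w a b = G.w a b := fun a ha b =>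
      reduce_erase_w_src G hWf hv hvS hsrc (hintP a ha).1 (hintP a ha).2 b
    have hgβ : g (u :: (int ++ [u'])) = u :: v :: (int ++ [u']) := rfl
    rw [hgβ]
    cases int with
    | nil =>
      show branchProd G'.w [u, u'] = branchProd G.w [u, u'] + branchProd G.w [u, v, u']
      rw [branchProd_pair, branchProd_pair, branchProd_triple]
      exact reduce_erase_w G hv (hSsub huS) (hSsub hu'S)
    | cons h t =>
      have htu : t ++ [u'] ≠ [] := by simp
      have hhS' : h ∈ S' := (hintP h (by simp)).1
      have hhS : h ∉ S := (hintP h (by simp)).2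
      have hQ : branchProd G'.w (h :: (t ++ [u'])) = branchProd G.w (h :: (t ++ [u'])) := by
        refine branchProd_congr ?_
        intro a ha b
        have hdl : (h :: (t ++ [u'])).dropLast = h :: t := by
          rw [show h :: (t ++ [u']) = (h :: t) ++ [u'] from rfl, List.dropLast_concat]
        rw [hdl] at ha
        exact hagree a (by simpa using ha) b
      have hwhh : G'.w h h = G.w h h := hagree h (by simp) h
      have hw'uh : G'.w u h = G.w u h + G.w u v * G.w v h / (X - G.w v v) :=
        reduce_erase_w G hv (hSsub huS) hhS'
      have hXh : X - G.w h h ≠ 0 := sub_ne_zero.mpr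
        (Ne.symm (hS.2.2.2 h (Finset.mem_of_mem_erase hhS') hhS))
      rw [show u :: ((h :: t) ++ [u']) = u :: h :: (t ++ [u']) from rfl]
      rw [branchProd_cons_cons G'.w u h htu, branchProd_cons_cons G.w u h htu]
      rw [show u :: v :: ((h :: t) ++ [u']) = u :: v :: h :: (t ++ [u']) from rfl]
      rw [branchProd_cons_cons G.w u v (by simp : h :: (t ++ [u']) ≠ []),
        branchProd_cons_cons G.w v h htu]
      rw [hQ, hwhh, hw'uh]
      simp only [← hX]
      field_simp
  have step4 : ∑ᶠ β ∈ B0, branchProd G.w β = ∑ᶠ β ∈ preB, branchProd G.w β := by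
    refine finsum_mem_eq_of_subset ?_ hpreBfin ?_
    · rintro β ⟨hbr, hnr⟩
      obtain ⟨h1, h2, int, rfl, hint, hnd, hu'i, hch⟩ := hbr
      refine ⟨h1, h2, int, rfl, ?_, hnd, hu'i⟩
      intro x hx
      refine ⟨Finset.mem_erase.mpr ⟨?_, (hint x hx).1⟩, (hint x hx).2⟩
      intro hxv
      subst hxv
      obtain ⟨r, hr⟩ := branch_source_head
        ⟨h1, h2, int, rfl, hint, hnd, hu'i, hch⟩ hvS hsrc
        (List.mem_cons_of_mem _ (List.mem_append_left _ hx))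
      exact hnr ⟨r, hr⟩
    · intro β hβ hnB0
      by_contra hnz
      obtain ⟨h1, h2, int, rfl, hint, hnd, hu'i⟩ := hβ
      have hch : (u :: (int ++ [u'])).Chain' (fun a b => G.w a b ≠ 0) := by
        by_contra hc; exact hnz (branchProd_eq_zero hc)
      have hbr : IsBranch G S u u' (u :: (int ++ [u'])) :=
        ⟨h1, h2, int, rfl, fun x hx =>
          ⟨Finset.mem_of_mem_erase (hint x hx).1, (hint x hx).2⟩, hnd, hu'i, hch⟩
      refine hnB0 ⟨hbr, ?_⟩
      rintro ⟨r, hr⟩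
      have hti : int ++ [u'] = v :: r := by injection hr
      cases int with
      | nil =>
        have : u' = v := by injection hti
        exact hvS (this ▸ h2)
      | cons a t =>
        have ha : a = v := by injection hti
        exact (Finset.mem_erase.mp (hint a (by simp)).1).1 ha
  have hinj : Set.InjOn g preB := by
    rintro β1 hβ1 β2 hβ2 h
    obtain ⟨-, -, int1, rfl, -, -, -⟩ := hβ1
    obtain ⟨-, -, int2, rfl, -, -, -⟩ := hβ2
    have htl : int1 ++ [u'] = int2 ++ [u'] := by
      have : u :: v :: (int1 ++ [u']) = u :: v :: (int2 ++ [u']) := h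
      injection (by injection this : v :: (int1 ++ [u']) = v :: (int2 ++ [u']))
    rw [htl]
  have step5a : ∑ᶠ β ∈ g '' preB, branchProd G.w β =
      ∑ᶠ β ∈ preB, branchProd G.w (g β) := finsum_mem_image hinj
  have step5 : ∑ᶠ β ∈ B1, branchProd G.w β = ∑ᶠ β ∈ g '' preB, branchProd G.w β := by
    refine finsum_mem_eq_of_subset ?_ (hpreBfin.image g) ?_
    · rintro β ⟨hbr, r, rfl⟩
      obtain ⟨h1, h2, int, heq, hint, hnd, hu'i, hch⟩ := hbr
      have hti : v :: r = int ++ [u'] := by injection heq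
      cases int with
      | nil =>
        exfalso
        have : v = u' := by injection hti
        exact hvS (this ▸ h2)
      | cons a t =>
        have hav : v = a := by injection hti
        have hrt : r = t ++ [u'] := by injection hti
        subst hav
        have hndvt : (v :: t).Nodup := (List.nodup_cons.mp hnd).2
        refine ⟨u :: (t ++ [u']), ⟨h1, h2, t, rfl, ?_, ?_, ?_⟩, ?_⟩
        · intro x hx
          have hx' := hint x (List.mem_cons_of_mem _ hx)
          refine ⟨Finset.mem_erase.mpr ⟨?_, hx'.1⟩, hx'.2⟩
          intro hxv
          exact (List.nodup_cons.mp hndvt).1 (hxv ▸ hx)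
        · have h1' := List.nodup_cons.mp hnd
          exact List.nodup_cons.mpr
            ⟨fun hu => h1'.1 (List.mem_cons_of_mem _ hu), (List.nodup_cons.mp hndvt).2⟩
        · exact fun hu => hu'i (List.mem_cons_of_mem _ hu)
        · show u :: v :: (t ++ [u']) = u :: v :: r
          rw [hrt]
    · intro β hβ hnB1
      by_contra hnz
      obtain ⟨σ, hσ, rfl⟩ := hβ
      obtain ⟨h1, h2, int, rfl, hint, hnd, hu'i⟩ := hσ
      have hgσ : g (u :: (int ++ [u'])) = u :: ((v :: int) ++ [u']) := rfl
      rw [hgσ] at hnz hnB1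
      have hch : (u :: ((v :: int) ++ [u'])).Chain' (fun a b => G.w a b ≠ 0) := by
        by_contra hc; exact hnz (branchProd_eq_zero hc)
      have hvint : v ∉ int := by
        intro hvi
        exact (Finset.mem_erase.mp (hint v hvi).1).1 rfl
      refine hnB1 ⟨⟨h1, h2, v :: int, rfl, ?_, ?_, ?_, hch⟩, int ++ [u'], rfl⟩
      · intro x hx
        rcases List.mem_cons.mp hx with hx | hx
        · subst hx; exact ⟨hv, hvS⟩
        · exact ⟨Finset.mem_of_mem_erase (hint x hx).1, (hint x hx).2⟩
      · refine List.nodup_cons.mpr ⟨?_, List.nodup_cons.mpr ⟨hvint, (List.nodup_cons.mp hnd).2⟩⟩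
        intro hu
        rcases List.mem_cons.mp hu with hu | hu
        · exact hvS (hu ▸ huS)
        · exact (List.nodup_cons.mp hnd).1 hu
      · intro hu'
        rcases List.mem_cons.mp hu' with hu' | hu'
        · exact hvS (hu' ▸ hu'S)
        · exact hu'i hu'
  have hunion : B0 ∪ B1 = B := by
    ext β
    constructor
    · rintro (⟨h, -⟩ | ⟨h, -⟩) <;> exact h
    · intro h
      by_cases hr : ∃ r, β = u :: v :: r
      · exact Or.inr ⟨h, hr⟩
      · exact Or.inl ⟨h, hr⟩
  have hdisj : Disjoint B0 B1 := by
    rw [Set.disjoint_left]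
    rintro β ⟨-, h⟩ ⟨-, h'⟩
    exact h h'
  show ∑ᶠ β ∈ B', branchProd G'.w β = ∑ᶠ β ∈ B, branchProd G.w β
  calc ∑ᶠ β ∈ B', branchProd G'.w β
      = ∑ᶠ β ∈ preB, branchProd G'.w β := step1
    _ = ∑ᶠ β ∈ preB, (branchProd G.w β + branchProd G.w (g β)) :=
        finsum_mem_congr rfl step2
    _ = (∑ᶠ β ∈ preB, branchProd G.w β) + ∑ᶠ β ∈ preB, branchProd G.w (g β) :=
        finsum_mem_add_distrib hpreBfin
    _ = (∑ᶠ β ∈ B0, branchProd G.w β) + ∑ᶠ β ∈ B1, branchProd G.w β := by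
        rw [step4, step5, step5a]
    _ = ∑ᶠ β ∈ B0 ∪ B1, branchProd G.w β :=
        (finsum_mem_union hdisj (hBfin.subset fun β h => h.1)
          (hBfin.subset fun β h => h.1)).symm
    _ = ∑ᶠ β ∈ B, branchProd G.w β := by rw [hunion]


lemma charDet_reduce_full (G : WDigraph V) :
    (G.reduce G.verts).charDet = G.charDet := by
  show (Matrix.of fun i j : {x // x ∈ G.verts} =>
      (G.reduce G.verts).w i.1 j.1 - if i = j then (RatFunc.X : RatFunc ℂ) else 0).det =
    (Matrix.of fun i j : {x // x ∈ G.verts} =>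
      G.w i.1 j.1 - if i = j then (RatFunc.X : RatFunc ℂ) else 0).det
  congr 1
  ext i j
  rw [Matrix.of_apply, Matrix.of_apply, reduce_w_full G i.2 j.2]

lemma charDet_reduce_aux : ∀ (n : ℕ) (G : WDigraph V), G.Wf → ∀ S : Finset V,
    IsStructuralSet G S → (G.verts \ S).card = n →
    G.charDet = (∏ x ∈ G.verts \ S, (G.w x x - RatFunc.X)) * (G.reduce S).charDet := by
  intro n
  induction n with
  | zero =>
    intro G hWf S hS hcard
    have hdiff : G.verts \ S = ∅ := Finset.card_eq_zero.mp hcard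
    have hSv : S = G.verts := by
      refine Finset.Subset.antisymm hS.2.1 fun x hx => ?_
      by_contra h
      exact Finset.notMem_empty x (hdiff ▸ Finset.mem_sdiff.mpr ⟨hx, h⟩)
    rw [hdiff, Finset.prod_empty, one_mul, hSv, charDet_reduce_full]
  | succ n IH =>
    intro G hWf S hS hcard
    have hvne : (G.verts \ S).Nonempty := Finset.card_pos.mp (by omega)
    obtain ⟨x₀, hx₀⟩ := hvne
    obtain ⟨hx₀G, hx₀S⟩ := Finset.mem_sdiff.mp hx₀
    obtain ⟨v, hvG, hvS, hsrc⟩ := exists_source G hWf hS hx₀G hx₀S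
    set S' := G.verts.erase v with hS'def
    set G' := G.reduce S' with hG'def
    have hG'Wf : G'.Wf := reduce_Wf G S'
    have hS'str : IsStructuralSet G' S := structural_reduce_erase G hWf hS hvG hvS hsrc
    have he : G'.verts \ S = (G.verts \ S).erase v := by
      have hgv : G'.verts = G.verts.erase v := rfl
      rw [hgv]
      ext x
      simp only [Finset.mem_sdiff, Finset.mem_erase]
      tauto
    have hcard' : (G'.verts \ S).card = n := by
      rw [he, Finset.card_erase_of_mem (Finset.mem_sdiff.mpr ⟨hvG, hvS⟩), hcard]
      omega
    have hIH := IH G' hG'Wf S hS'str hcard'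
    have hL2 : G'.reduce S = G.reduce S := reduce_reduce G hWf hS hvG hvS hsrc
    have hL1 : G.charDet = (G.w v v - RatFunc.X) * G'.charDet :=
      charDet_erase G hvG (hS.2.2.2 v hvG hvS)
    have hprod : ∏ x ∈ G'.verts \ S, (G'.w x x - RatFunc.X) =
        ∏ x ∈ (G.verts \ S).erase v, (G.w x x - RatFunc.X) := by
      rw [← he]
      refine Finset.prod_congr rfl fun x hx => ?_
      obtain ⟨hx1, hx2⟩ := Finset.mem_sdiff.mp hx
      rw [reduce_erase_w_src G hWf hvG hvS hsrc hx1 hx2 x]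
    rw [hL1, hIH, hL2, hprod,
      ← Finset.mul_prod_erase (G.verts \ S) _ (Finset.mem_sdiff.mpr ⟨hvG, hvS⟩)]
    ring

/-- **Main factorization.** `det(M(G)-λI) = ∏_{v∉S}(ω(e_vv)-λ) · det(M(R_S(G))-λI)`. -/
theorem charDet_reduce (G : WDigraph V) (hWf : G.Wf) {S : Finset V}
    (hS : IsStructuralSet G S) :
    G.charDet = (∏ x ∈ G.verts \ S, (G.w x x - RatFunc.X)) * (G.reduce S).charDet :=
  charDet_reduce_aux _ G hWf S hS rfl


/-! ### Order of vanishing of rational functions -/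

/-- The order of vanishing of a rational function at a point
(positive at zeros, negative at poles). -/
noncomputable def rord (f : RatFunc ℂ) (z : ℂ) : ℤ :=
  (Polynomial.rootMultiplicity z f.num : ℤ) - Polynomial.rootMultiplicity z f.denom

lemma rord_mul {f g : RatFunc ℂ} (hf : f ≠ 0) (hg : g ≠ 0) (z : ℂ) :
    rord (f * g) z = rord f z + rord g z := by
  have hfd := RatFunc.denom_ne_zero f
  have hgd := RatFunc.denom_ne_zero g
  have hfgd := RatFunc.denom_ne_zero (f * g)
  have hfgn : (f * g).num ≠ 0 := RatFunc.num_ne_zero (mul_ne_zero hf hg)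
  set φ := algebraMap (Polynomial ℂ) (RatFunc ℂ) with hφ
  have h1 : φ (f * g).num / φ (f * g).denom = φ f.num * φ g.num / (φ f.denom * φ g.denom) := by
    rw [RatFunc.num_div_denom, ← div_mul_div_comm, RatFunc.num_div_denom,
      RatFunc.num_div_denom]
  rw [div_eq_div_iff (RatFunc.algebraMap_ne_zero hfgd)
    (mul_ne_zero (RatFunc.algebraMap_ne_zero hfd) (RatFunc.algebraMap_ne_zero hgd))] at h1
  have hkey : (f * g).num * (f.denom * g.denom) = f.num * g.num * (f * g).denom :=
    RatFunc.algebraMap_injective ℂ (by rw [map_mul, map_mul, map_mul, map_mul]; exact h1)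
  have e1 := congrArg (Polynomial.rootMultiplicity z) hkey
  rw [Polynomial.rootMultiplicity_mul (mul_ne_zero hfgn (mul_ne_zero hfd hgd)),
    Polynomial.rootMultiplicity_mul (mul_ne_zero hfd hgd),
    Polynomial.rootMultiplicity_mul
      (mul_ne_zero (mul_ne_zero (RatFunc.num_ne_zero hf) (RatFunc.num_ne_zero hg)) hfgd),
    Polynomial.rootMultiplicity_mul
      (mul_ne_zero (RatFunc.num_ne_zero hf) (RatFunc.num_ne_zero hg))] at e1
  unfold rord
  omega

lemma rord_one (z : ℂ) : rord 1 z = 0 := by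
  have h1 : Polynomial.rootMultiplicity z (1 : Polynomial ℂ) = 0 :=
    Polynomial.rootMultiplicity_eq_zero (by simp [Polynomial.IsRoot])
  simp [rord, RatFunc.num_one, RatFunc.denom_one, h1]

lemma rord_neg_one (z : ℂ) : rord (-1) z = 0 := by
  have hrepr : (-1 : RatFunc ℂ) = algebraMap (Polynomial ℂ) (RatFunc ℂ) (-1) := by
    rw [map_neg, map_one]
  have h1 : Polynomial.rootMultiplicity z (1 : Polynomial ℂ) = 0 :=
    Polynomial.rootMultiplicity_eq_zero (by simp [Polynomial.IsRoot])
  have hn1 : Polynomial.rootMultiplicity z (-1 : Polynomial ℂ) = 0 :=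
    Polynomial.rootMultiplicity_eq_zero (by simp [Polynomial.IsRoot])
  unfold rord
  rw [hrepr, RatFunc.num_algebraMap, RatFunc.denom_algebraMap, h1, hn1]
  simp

lemma rord_neg {f : RatFunc ℂ} (hf : f ≠ 0) (z : ℂ) : rord (-f) z = rord f z := by
  rw [neg_eq_neg_one_mul, rord_mul (by norm_num) hf, rord_neg_one, zero_add]

lemma rord_prod {α : Type*} {s : Finset α} {f : α → RatFunc ℂ}
    (hf : ∀ x ∈ s, f x ≠ 0) (z : ℂ) :
    (∏ x ∈ s, f x) ≠ 0 ∧ rord (∏ x ∈ s, f x) z = ∑ x ∈ s, rord (f x) z := by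
  classical
  induction s using Finset.induction with
  | empty => simpa using rord_one z
  | insert a s' hx ih =>
    have hfa : f a ≠ 0 := hf a (Finset.mem_insert_self a s')
    obtain ⟨hp, hs⟩ := ih fun x hxs => hf x (Finset.mem_insert_of_mem hxs)
    rw [Finset.prod_insert hx, Finset.sum_insert hx]
    exact ⟨mul_ne_zero hfa hp, by rw [rord_mul hfa hp, hs]⟩

/-- The number of occurrences of `z` in the roots of the numerator is the positive
part of the order of vanishing. -/
lemma count_num_roots (f : RatFunc ℂ) (hf : f ≠ 0) (z : ℂ) :
    (f.num.roots.count z : ℤ) = max (rord f z) 0 := by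
  rw [Polynomial.count_roots]
  have hcop := RatFunc.isCoprime_num_denom f
  have h0 : Polynomial.rootMultiplicity z f.num = 0 ∨
      Polynomial.rootMultiplicity z f.denom = 0 := by
    by_contra hc
    push_neg at hc
    have hd1 : (Polynomial.X - Polynomial.C z) ∣ f.num :=
      Polynomial.dvd_iff_isRoot.mpr
        ((Polynomial.rootMultiplicity_pos (RatFunc.num_ne_zero hf)).mp
          (Nat.pos_of_ne_zero hc.1))
    have hd2 : (Polynomial.X - Polynomial.C z) ∣ f.denom :=
      Polynomial.dvd_iff_isRoot.mpr
        ((Polynomial.rootMultiplicity_pos (RatFunc.denom_ne_zero f)).mp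
          (Nat.pos_of_ne_zero hc.2))
    exact Polynomial.not_isUnit_X_sub_C z (hcop.isUnit_of_dvd' hd1 hd2)
  unfold rord
  rcases h0 with h0 | h0
  · rw [h0]
    simp only [Nat.cast_zero, zero_sub]
    rw [max_eq_right (neg_nonpos.mpr (Int.natCast_nonneg _))]
  · rw [h0]
    simp only [Nat.cast_zero, sub_zero]
    rw [max_eq_left (Int.natCast_nonneg _)]

lemma eval_ne_zero_of_dvd {p q : Polynomial ℂ} (h : p ∣ q) {z : ℂ}
    (hq : q.eval z ≠ 0) : p.eval z ≠ 0 := by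
  obtain ⟨c, rfl⟩ := h
  intro h0
  exact hq (by simp [Polynomial.eval_mul, h0])

/-- Outside `N(G;S)`, each off-`S` loop factor has order of vanishing zero. -/
lemma rord_X_sub_loop {G : WDigraph V} {S : Finset V} {x : V} {z : ℂ}
    (hx : x ∈ G.verts) (hxS : x ∉ S) (hz : z ∉ NSet G S) :
    rord (RatFunc.X - G.w x x) z = 0 := by
  have hz1 : (RatFunc.X - G.w x x).num.eval z ≠ 0 := by
    intro h
    exact hz ⟨x, hx, hxS, Or.inl h⟩
  have hz2 : (G.w x x).denom.eval z ≠ 0 := by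
    intro h
    exact hz ⟨x, hx, hxS, Or.inr h⟩
  have hnum : Polynomial.rootMultiplicity z (RatFunc.X - G.w x x).num = 0 :=
    Polynomial.rootMultiplicity_eq_zero hz1
  have h1 : (RatFunc.X - G.w x x).denom ∣ (RatFunc.X : RatFunc ℂ).denom * (-(G.w x x)).denom := by
    rw [sub_eq_add_neg]
    exact RatFunc.denom_add_dvd _ _
  have h2 : (-(G.w x x)).denom ∣ ((-1 : RatFunc ℂ)).denom * (G.w x x).denom := by
    rw [neg_eq_neg_one_mul]
    exact RatFunc.denom_mul_dvd _ _
  have hdX : (RatFunc.X : RatFunc ℂ).denom = 1 := by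
    rw [← RatFunc.algebraMap_X, RatFunc.denom_algebraMap]
  have hdn1 : ((-1 : RatFunc ℂ)).denom = 1 := by
    have : (-1 : RatFunc ℂ) = algebraMap (Polynomial ℂ) (RatFunc ℂ) (-1) := by
      rw [map_neg, map_one]
    rw [this, RatFunc.denom_algebraMap]
  rw [hdX, one_mul] at h1
  rw [hdn1, one_mul] at h2
  have hden : Polynomial.rootMultiplicity z (RatFunc.X - G.w x x).denom = 0 :=
    Polynomial.rootMultiplicity_eq_zero
      (eval_ne_zero_of_dvd (h1.trans h2) hz2)
  simp [rord, hnum, hden]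

/-- Isomorphic weighted digraphs have the same characteristic determinant. -/
lemma charDet_isom {V₁ : Type*} [Fintype V₁] [DecidableEq V₁]
    {V₂ : Type*} [Fintype V₂] [DecidableEq V₂]
    {G : WDigraph V₁} {H : WDigraph V₂} (h : WDigraph.Isom G H) :
    G.charDet = H.charDet := by
  obtain ⟨ρ, hρ⟩ := h
  unfold WDigraph.charDet
  rw [← Matrix.det_reindex_self ρ]
  congr 1
  ext i j
  simp only [Matrix.reindex_apply, Matrix.submatrix_apply, Matrix.of_apply]
  have h1 : H.w i.1 j.1 = G.w (ρ.symm i).1 (ρ.symm j).1 := by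
    conv_lhs => rw [← Equiv.apply_symm_apply ρ i, ← Equiv.apply_symm_apply ρ j]
    exact hρ _ _
  have h2 : (ρ.symm i = ρ.symm j) ↔ (i = j) := (Equiv.injective ρ.symm).eq_iff
  rw [h1, if_congr h2 rfl rfl]

end IsoRed

end Aux

/-- **Corollary.** If `G, H ∈ 𝔾` have a reduction in common via the structural sets
`S` and `T` respectively, then `σ(G)` and `σ(H)` differ at most by
`N(G;S) ∪ N(H;T)`. -/
theorem spec_diff_of_common_reduction
    {V₁ : Type*} [Fintype V₁] [DecidableEq V₁] {V₂ : Type*} [Fintype V₂] [DecidableEq V₂]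
    (G : WDigraph V₁) (H : WDigraph V₂) (hG : G.Wf) (hH : H.Wf)
    (S : Finset V₁) (T : Finset V₂)
    (hS : IsStructuralSet G S) (hT : IsStructuralSet H T)
    (hiso : WDigraph.Isom (G.reduce S) (H.reduce T)) :
    SpecDiffAtMost G.spec H.spec (NSet G S ∪ NSet H T) := by
  classical
  set R : RatFunc ℂ := (G.reduce S).charDet with hR
  have hRT : (H.reduce T).charDet = R := (IsoRed.charDet_isom hiso).symm
  have hGfac : G.charDet = (∏ x ∈ G.verts \ S, (G.w x x - RatFunc.X)) * R :=
    IsoRed.charDet_reduce G hG hS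
  have hHfac : H.charDet = (∏ x ∈ H.verts \ T, (H.w x x - RatFunc.X)) * R := by
    rw [IsoRed.charDet_reduce H hH hT, hRT]
  have hfacG : ∀ x ∈ G.verts \ S, (G.w x x - RatFunc.X) ≠ 0 := by
    intro x hx
    obtain ⟨hx1, hx2⟩ := Finset.mem_sdiff.mp hx
    exact sub_ne_zero.mpr (hS.2.2.2 x hx1 hx2)
  have hfacH : ∀ x ∈ H.verts \ T, (H.w x x - RatFunc.X) ≠ 0 := by
    intro x hx
    obtain ⟨hx1, hx2⟩ := Finset.mem_sdiff.mp hx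
    exact sub_ne_zero.mpr (hT.2.2.2 x hx1 hx2)
  by_cases hR0 : R = 0
  · have hg : G.spec = 0 := by
      unfold WDigraph.spec
      rw [hGfac, hR0, mul_zero, RatFunc.num_zero, Polynomial.roots_zero]
    have hh : H.spec = 0 := by
      unfold WDigraph.spec
      rw [hHfac, hR0, mul_zero, RatFunc.num_zero, Polynomial.roots_zero]
    unfold SpecDiffAtMost
    rw [hg, hh]
  · refine Multiset.ext.mpr fun z => ?_
    simp only [Multiset.count_filter]
    by_cases hzN : z ∈ NSet G S ∪ NSet H T
    · simp [hzN]
    · have hzG : z ∉ NSet G S := fun h => hzN (Or.inl h)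
      have hzH : z ∉ NSet H T := fun h => hzN (Or.inr h)
      simp only [hzN, not_false_iff, if_pos]
      have hprodG := IsoRed.rord_prod hfacG z
      have hprodH := IsoRed.rord_prod hfacH z
      have hGne : G.charDet ≠ 0 := by
        rw [hGfac]; exact mul_ne_zero hprodG.1 hR0
      have hHne : H.charDet ≠ 0 := by
        rw [hHfac]; exact mul_ne_zero hprodH.1 hR0
      have hsumG : ∑ x ∈ G.verts \ S, IsoRed.rord (G.w x x - RatFunc.X) z = 0 := by
        refine Finset.sum_eq_zero fun x hx => ?_
        obtain ⟨hx1, hx2⟩ := Finset.mem_sdiff.mp hx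
        have h1 : G.w x x - RatFunc.X = -(RatFunc.X - G.w x x) := by ring
        rw [h1, IsoRed.rord_neg (sub_ne_zero.mpr (Ne.symm (hS.2.2.2 x hx1 hx2))) z,
          IsoRed.rord_X_sub_loop hx1 hx2 hzG]
      have hsumH : ∑ x ∈ H.verts \ T, IsoRed.rord (H.w x x - RatFunc.X) z = 0 := by
        refine Finset.sum_eq_zero fun x hx => ?_
        obtain ⟨hx1, hx2⟩ := Finset.mem_sdiff.mp hx
        have h1 : H.w x x - RatFunc.X = -(RatFunc.X - H.w x x) := by ring
        rw [h1, IsoRed.rord_neg (sub_ne_zero.mpr (Ne.symm (hT.2.2.2 x hx1 hx2))) z,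
          IsoRed.rord_X_sub_loop hx1 hx2 hzH]
      have hcountG : (Multiset.count z G.spec : ℤ) = max (IsoRed.rord R z) 0 := by
        show ((G.charDet.num.roots.count z : ℕ) : ℤ) = _
        rw [IsoRed.count_num_roots _ hGne z]
        rw [show G.charDet = _ from hGfac, IsoRed.rord_mul hprodG.1 hR0, hprodG.2, hsumG,
          zero_add]
      have hcountH : (Multiset.count z H.spec : ℤ) = max (IsoRed.rord R z) 0 := by
        show ((H.charDet.num.roots.count z : ℕ) : ℤ) = _
        rw [IsoRed.count_num_roots _ hHne z]
        rw [show H.charDet = _ from hHfac, IsoRed.rord_mul hprodH.1 hR0, hprodH.2, hsumH,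
          zero_add]
      exact_mod_cast hcountG.trans hcountH.symm
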